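/- Let r ≥ 2 and c₁ be integers such that gcd(r, c₁) > 1 and r does not divide c₁. Then there exists an integer n with (c₁ − 1)/r < n/(r − 1) < c₁/r, i.e., (c₁ − 1)(r − 1) < n·r < c₁(r − 1). -/

import Mathlib

/-- Let `r ≥ 2` and `c₁` be integers with `gcd(r, c₁) > 1`
and `r ∤ c₁`.  Then there exists an integer `n` with
`(c₁ − 1)/r < n/(r − 1) < c₁/r`, i.e.
`(c₁ − 1)(r − 1) < n·r < c₁(r − 1)`. -/
theorem exists_intermediate_slope (r c1 : ℤ) (hr : 2 ≤ r)
    (hgcd : 1 < Int.gcd r c1) (hnd : ¬ r ∣ c1) :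
    ∃ n : ℤ,
      (((c1 : ℚ) - 1) / (r : ℚ) < (n : ℚ) / ((r : ℚ) - 1) ∧
        (n : ℚ) / ((r : ℚ) - 1) < (c1 : ℚ) / (r : ℚ)) ∧
      ((c1 - 1) * (r - 1) < n * r ∧ n * r < c1 * (r - 1)) := by
  set m := c1 % r with hm
  have hm0 : 0 < m := by
    rcases (Int.emod_nonneg c1 (by omega : r ≠ 0)).lt_or_eq with h | h
    · exact h
    · exact absurd (Int.dvd_of_emod_eq_zero h.symm) hnd
  have hmr : m < r := Int.emod_lt_of_pos c1 (by omega)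
  have hd : (Int.gcd r c1 : ℤ) ∣ m := by
    rw [hm, Int.emod_def]
    exact dvd_sub (Int.gcd_dvd_right r c1) ((Int.gcd_dvd_left r c1).mul_right _)
  have hg2 : (2 : ℤ) ≤ (Int.gcd r c1 : ℤ) := by exact_mod_cast hgcd
  have hm2 : 2 ≤ m := le_trans hg2 (Int.le_of_dvd hm0 hd)
  set n : ℤ := c1 - c1 / r - 1 with hn
  refine ⟨n, ?_⟩
  have hkey : (c1 - c1 / r - 1) * r = c1 * (r - 1) + m - r := by
    rw [hm, Int.emod_def]; ring
  have h1 : (c1 - 1) * (r - 1) < (c1 - c1 / r - 1) * r := by nlinarith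
  have h2 : (c1 - c1 / r - 1) * r < c1 * (r - 1) := by nlinarith
  have hr0 : (0 : ℚ) < (r : ℚ) := by exact_mod_cast (by omega : (0:ℤ) < r)
  have hr1 : (0 : ℚ) < (r : ℚ) - 1 := by
    have : (1 : ℚ) < (r : ℚ) := by exact_mod_cast (by omega : (1:ℤ) < r)
    linarith
  refine ⟨⟨?_, ?_⟩, h1, h2⟩
  · rw [div_lt_div_iff₀ hr0 hr1]
    exact_mod_cast h1
  · rw [div_lt_div_iff₀ hr1 hr0]
    exact_mod_cast h2
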